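/- Let (a,b) be a perplex parameter. For x = (x₁,x₂) ∈ ℝ², define the perplex conjugate x̃ := (1/(a₁b₂ − a₂b₁))·((b₂² + a₂b₁)x₁ + (b₂b₃ + a₃b₁)x₂, −(a₁b₁ + b₁b₂)x₁ − (b₂² + a₂b₁)x₂). Then for every x ∈ ℝ², x * x̃ = N(x)·𝟙, where N(x) := (a₁b₂ − a₂b₁)x₁² + (a₁b₃ − a₃b₁)x₁x₂ − (a₁a₃ − a₂²)x₂² and 𝟙 = (1/(a₁b₂ − a₂b₁))·(b₂, −b₁). -/

import Mathlib

open Filter Topology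

noncomputable section

/-- The perplex product on `ℝ²` determined by the parameters `a = (a₁,a₂,a₃)`,
`b = (b₁,b₂,b₃)`. -/
def pmul (a₁ a₂ a₃ b₁ b₂ b₃ : ℝ) (x y : ℝ × ℝ) : ℝ × ℝ :=
  (a₁ * x.1 * y.1 + a₂ * (x.1 * y.2 + x.2 * y.1) + a₃ * x.2 * y.2,
   b₁ * x.1 * y.1 + b₂ * (x.1 * y.2 + x.2 * y.1) + b₃ * x.2 * y.2)

/-- `(a,b)` is a perplex parameter: conditions (i)-(iv). -/
def IsPerplexParam (a₁ a₂ a₃ b₁ b₂ b₃ : ℝ) : Prop :=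
  a₁ * a₃ - a₂ ^ 2 ≠ 0 ∧ a₁ * b₂ - a₂ * b₁ ≠ 0 ∧
    a₂ * b₂ - a₃ * b₁ = 0 ∧ a₁ * a₃ - a₂ ^ 2 + a₂ * b₃ - a₃ * b₂ = 0

/-- The multiplicative identity `𝟙` of the perplex algebra. -/
def pone (a₁ a₂ b₁ b₂ : ℝ) : ℝ × ℝ :=
  (1 / (a₁ * b₂ - a₂ * b₁)) • ((b₂, -b₁) : ℝ × ℝ)

/-- The perplex norm `N`. -/
def pN (a₁ a₂ a₃ b₁ b₂ b₃ : ℝ) (x : ℝ × ℝ) : ℝ :=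
  (a₁ * b₂ - a₂ * b₁) * x.1 ^ 2 + (a₁ * b₃ - a₃ * b₁) * x.1 * x.2 -
    (a₁ * a₃ - a₂ ^ 2) * x.2 ^ 2

/-- The perplex conjugate `x̃`. -/
noncomputable def pconj (a₁ a₂ a₃ b₁ b₂ b₃ : ℝ) (x : ℝ × ℝ) : ℝ × ℝ :=
  (1 / (a₁ * b₂ - a₂ * b₁)) •
    (((b₂ ^ 2 + a₂ * b₁) * x.1 + (b₂ * b₃ + a₃ * b₁) * x.2,
      -((a₁ * b₁ + b₁ * b₂) * x.1) - (b₂ ^ 2 + a₂ * b₁) * x.2) : ℝ × ℝ)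

/-- For every `x`, `x * x̃ = N(x)·𝟙`. -/
theorem pmul_pconj (a₁ a₂ a₃ b₁ b₂ b₃ : ℝ)
    (hp : IsPerplexParam a₁ a₂ a₃ b₁ b₂ b₃) (x : ℝ × ℝ) :
    pmul a₁ a₂ a₃ b₁ b₂ b₃ x (pconj a₁ a₂ a₃ b₁ b₂ b₃ x) = pN a₁ a₂ a₃ b₁ b₂ b₃ x • pone a₁ a₂ b₁ b₂ := by
  obtain ⟨h1, h2, h3, h4⟩ := hp
  simp only [pmul, pconj, pone, pN, Prod.smul_mk, smul_eq_mul, Prod.mk.injEq]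
  constructor <;> field_simp
  · linear_combination b₂ * x.2 ^ 2 * h4
  · linear_combination -b₁ * x.2 ^ 2 * h4 / (a₁ * b₂ - a₂ * b₁)
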